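/- Let n ∈ ℕ and let H, a, P be n×n complex matrices with H * a = a * (H + P) and H * P = P * H. Then for every t ∈ ℝ: Matrix.exp(t • (Complex.I • H)) * a * Matrix.exp(-(t • (Complex.I • H))) = a * Matrix.exp(t • (Complex.I • P)). -/

import Mathlib

open Matrix

section aux
variable {n : ℕ}

attribute [local instance] Matrix.linftyOpNormedRing Matrix.linftyOpNormedAlgebra

theorem exp_intertwine_aux (X Y a : Matrix (Fin n) (Fin n) ℂ)
    (h : X * a = a * Y) :
    NormedSpace.exp X * a = a * NormedSpace.exp Y := by
  have hpow : ∀ k : ℕ, X ^ k * a = a * Y ^ k := by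
    intro k
    induction k with
    | zero => simp
    | succ k ih =>
      rw [pow_succ', mul_assoc, ih, ← mul_assoc, h, mul_assoc, ← pow_succ']
  rw [NormedSpace.exp_eq_tsum ℂ]
  have hs : Summable fun k : ℕ => ((k.factorial : ℂ))⁻¹ • X ^ k :=
    NormedSpace.expSeries_summable' X
  have hs' : Summable fun k : ℕ => ((k.factorial : ℂ))⁻¹ • Y ^ k :=
    NormedSpace.expSeries_summable' Y
  rw [← hs.tsum_mul_right a, ← hs'.tsum_mul_left a]
  congr 1
  funext k
  rw [smul_mul_assoc, hpow k, mul_smul_comm]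

end aux

theorem heisenberg_evolution_of_exchange_operator (n : ℕ)
    (H a P : Matrix (Fin n) (Fin n) ℂ)
    (hexch : H * a = a * (H + P))
    (hHP : H * P = P * H) :
    ∀ t : ℝ,
      NormedSpace.exp (t • (Complex.I • H)) * a *
          NormedSpace.exp (-(t • (Complex.I • H)))
        = a * NormedSpace.exp (t • (Complex.I • P)) := by
  intro t
  have h1 : (t • (Complex.I • H)) * a = a * (t • (Complex.I • H) + t • (Complex.I • P)) := by
    simp [smul_mul_assoc, mul_smul_comm, hexch, mul_add, smul_add]
  have hcomm : Commute (t • (Complex.I • H)) (t • (Complex.I • P)) := by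
    apply Commute.smul_left; apply Commute.smul_right
    apply Commute.smul_left; apply Commute.smul_right
    exact hHP
  have h2 := exp_intertwine_aux (t • (Complex.I • H))
    (t • (Complex.I • H) + t • (Complex.I • P)) a h1
  rw [Matrix.exp_add_of_commute _ _ hcomm] at h2
  have h3 : NormedSpace.exp (t • (Complex.I • H)) *
      NormedSpace.exp (-(t • (Complex.I • H))) = 1 := by
    rw [← Matrix.exp_add_of_commute (t • (Complex.I • H)) (-(t • (Complex.I • H))) (Commute.neg_right (Commute.refl _)),
      add_neg_cancel, NormedSpace.exp_zero]
  calc NormedSpace.exp (t • (Complex.I • H)) * a *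
          NormedSpace.exp (-(t • (Complex.I • H)))
      = a * (NormedSpace.exp (t • (Complex.I • H)) *
          NormedSpace.exp (t • (Complex.I • P))) *
          NormedSpace.exp (-(t • (Complex.I • H))) := by rw [h2]
    _ = a * (NormedSpace.exp (t • (Complex.I • P)) *
          (NormedSpace.exp (t • (Complex.I • H)) *
          NormedSpace.exp (-(t • (Complex.I • H))))) := by
        rw [(hcomm.exp).eq, mul_assoc, mul_assoc]
    _ = a * NormedSpace.exp (t • (Complex.I • P)) := by rw [h3, mul_one]
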